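/- Let K be an n×n symmetric positive semidefinite Gram matrix K = (⟨z_i, z_j⟩) of vectors z_1,…,z_n in an inner product space, I ⊆ [n] with K_I = Q_I^T K Q_I invertible (Q_I the column-selection matrix), and let 1_n ∈ ℝ^n be the vector with all entries 1/n. Then ‖z̄ − z_I‖² = 1_n^T (K − K Q_I K_I^{-1} Q_I^T K^T) 1_n, where z̄ = (1/n)Σ z_i and z_I is the best approximation of z̄ from span{z_i : i ∈ I}. -/

import Mathlib

open RealInnerProductSpace Finset Matrix

/-- Nyström identity: `‖z̄ − z_I‖² = 1ₙᵀ (K − K Q_I K_I⁻¹ Q_Iᵀ Kᵀ) 1ₙ`, where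
`K Q_I K_I⁻¹ Q_Iᵀ Kᵀ` is the Nyström approximation of the Gram matrix `K`. -/
theorem nystrom_identity
    {H : Type*} [NormedAddCommGroup H] [InnerProductSpace ℝ H] {n : ℕ}
    (z : Fin n → H) (zbar : H) (hzbar : zbar = (n : ℝ)⁻¹ • ∑ i, z i)
    (K : Matrix (Fin n) (Fin n) ℝ) (hK : K = fun i j => ⟪z i, z j⟫)
    (I : Finset (Fin n))
    (Q : Matrix (Fin n) I ℝ) (hQ : Q = fun i j => if i = j.1 then 1 else 0)
    (KI : Matrix I I ℝ) (hKI : KI = Qᵀ * K * Q)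
    (hKIinv : IsUnit KI.det)
    (one_n : Fin n → ℝ) (hone : one_n = fun _ => (n : ℝ)⁻¹)
    (αI : I → ℝ) (hα : αI = KI⁻¹ *ᵥ (Qᵀ *ᵥ (K *ᵥ one_n)))
    (zI : H) (hzI : zI = ∑ i : I, αI i • z i.1) :
    ‖zbar - zI‖ ^ 2 = one_n ⬝ᵥ ((K - K * Q * KI⁻¹ * Qᵀ * Kᵀ) *ᵥ one_n) := by
  have hAdot : ∀ {m k : Type} [Fintype m] [Fintype k] (A : Matrix m k ℝ)
      (x : k → ℝ) (y : m → ℝ), (A *ᵥ x) ⬝ᵥ y = x ⬝ᵥ (Aᵀ *ᵥ y) := by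
    intro m k _ _ A x y
    rw [dotProduct_comm, Matrix.dotProduct_mulVec, ← Matrix.mulVec_transpose,
      dotProduct_comm]
  have key : ∀ a b : Fin n → ℝ,
      ⟪∑ i, a i • z i, ∑ j, b j • z j⟫ = a ⬝ᵥ (K *ᵥ b) := by
    intro a b
    subst hK
    simp only [inner_sum, sum_inner, real_inner_smul_left, real_inner_smul_right,
      Matrix.mulVec, dotProduct, Finset.mul_sum]
    rw [Finset.sum_comm]
    apply Finset.sum_congr rfl; intro i _
    apply Finset.sum_congr rfl; intro j _
    rw [real_inner_comm]; ring
  have hzbar' : zbar = ∑ i, one_n i • z i := by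
    rw [hzbar, hone, Finset.smul_sum]
  have hzI' : zI = ∑ i, (Q *ᵥ αI) i • z i := by
    rw [hzI, hQ]
    simp only [Matrix.mulVec, dotProduct, Finset.sum_smul, ite_mul, one_mul, zero_mul,
      ite_smul, zero_smul]
    rw [Finset.sum_comm]
    apply Finset.sum_congr rfl
    intro j _
    rw [Finset.sum_ite_eq' Finset.univ (j : Fin n) (fun i => αI j • z i)]
    simp
  have hdiff : zbar - zI = ∑ i, (one_n - Q *ᵥ αI) i • z i := by
    rw [hzbar', hzI', ← Finset.sum_sub_distrib]
    apply Finset.sum_congr rfl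
    intro i _
    rw [Pi.sub_apply, sub_smul]
  have hnorm : ‖zbar - zI‖ ^ 2 = (one_n - Q *ᵥ αI) ⬝ᵥ (K *ᵥ (one_n - Q *ᵥ αI)) := by
    rw [← real_inner_self_eq_norm_sq, hdiff, key]
  rw [hnorm]
  have hKsymm : Kᵀ = K := by
    rw [hK]; ext i j; exact real_inner_comm _ _
  have hinv : KI * KI⁻¹ = 1 := Matrix.mul_nonsing_inv _ hKIinv
  set u := one_n with hu
  set p := Q *ᵥ αI with hp
  have hKIα : KI *ᵥ αI = Qᵀ *ᵥ (K *ᵥ u) := by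
    rw [hα, Matrix.mulVec_mulVec, hinv, Matrix.one_mulVec]
  have hpKp : p ⬝ᵥ (K *ᵥ p) = p ⬝ᵥ (K *ᵥ u) := by
    have h1 : p ⬝ᵥ (K *ᵥ p) = αI ⬝ᵥ (KI *ᵥ αI) := by
      rw [hp, hAdot Q, hKI, ← Matrix.mulVec_mulVec, ← Matrix.mulVec_mulVec]
    have h2 : αI ⬝ᵥ (Qᵀ *ᵥ (K *ᵥ u)) = p ⬝ᵥ (K *ᵥ u) := by
      rw [hp, hAdot Q]
    rw [h1, hKIα, h2]
  have huKp : u ⬝ᵥ (K *ᵥ p) = p ⬝ᵥ (K *ᵥ u) := by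
    rw [dotProduct_comm, hAdot K, hKsymm]
  have hrhs : (K * Q * KI⁻¹ * Qᵀ * Kᵀ) *ᵥ u = K *ᵥ p := by
    rw [hKsymm, hp, hα]
    simp only [← Matrix.mulVec_mulVec, Matrix.mul_assoc]
  rw [Matrix.sub_mulVec, dotProduct_sub, hrhs, huKp]
  rw [Matrix.mulVec_sub, dotProduct_sub, sub_dotProduct, sub_dotProduct,
    hpKp, huKp]
  ring
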